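/- Principal logarithm of a symplectic matrix: if M ∈ Sp(n,ℝ) has no eigenvalue on the closed negative real axis, then its principal logarithm X = ln(M) (the unique logarithm with spectrum in the strip |Im z| < π) is a real Hamiltonian matrix, i.e. Xᵀ J + J X = 0. -/

import Mathlib

open Matrix

/-- The standard symplectic matrix `J = [[0, Iₙ],[−Iₙ, 0]]`. -/
noncomputable def stdSymplJ (n : ℕ) : Matrix (Fin n ⊕ Fin n) (Fin n ⊕ Fin n) ℝ :=
  Matrix.fromBlocks 0 1 (-1) 0

open NormedSpace Polynomial

namespace PLogAux

/-- An endomorphism of a nontrivial f.d. complex vector space whose only eigenvalue is `μ₀`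
differs from `μ₀ • 1` by a nilpotent. -/
theorem sub_smul_one_pow_eq_zero {V : Type*} [AddCommGroup V] [Module ℂ V]
    [FiniteDimensional ℂ V] (f : Module.End ℂ V) (μ₀ : ℂ)
    (hall : ∀ μ : ℂ, f.HasEigenvalue μ → μ = μ₀) :
    ∃ d : ℕ, (f - μ₀ • 1) ^ d = 0 := by
  have hint : IsIntegral ℂ f := LinearMap.isIntegral f
  set p := minpoly ℂ f with hp
  have hmon : p.Monic := minpoly.monic hint
  have hsplit : p.Splits := IsAlgClosed.splits p
  have hroots : ∀ a ∈ p.roots, a = μ₀ := by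
    intro a ha
    have : p.IsRoot a := isRoot_of_mem_roots ha
    exact hall a (Module.End.hasEigenvalue_iff_isRoot.mpr this)
  have hfact : p = (X - C μ₀) ^ Multiset.card p.roots := by
    conv_lhs => rw [hsplit.eq_prod_roots_of_monic hmon]
    rw [← Multiset.prod_replicate]
    congr 1
    rw [Multiset.eq_replicate]
    refine ⟨by simp, ?_⟩
    intro b hb
    obtain ⟨a, ha, rfl⟩ := Multiset.mem_map.mp hb
    rw [hroots a ha]
  refine ⟨Multiset.card p.roots, ?_⟩
  have := minpoly.aeval ℂ f
  rw [← hp, hfact] at this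
  simpa [Algebra.algebraMap_eq_smul_one] using this



variable {ι : Type*} [Fintype ι] [DecidableEq ι]

/-- `P ↦ P *ᵥ y` as a linear map. -/
noncomputable def appVec (y : ι → ℂ) : Matrix ι ι ℂ →ₗ[ℂ] (ι → ℂ) where
  toFun P := P *ᵥ y
  map_add' P Q := Matrix.add_mulVec P Q y
  map_smul' c P := Matrix.smul_mulVec c P y

theorem exp_mulVec (C : Matrix ι ι ℂ) (y : ι → ℂ) :
    exp C *ᵥ y = ∑' k : ℕ, ((k.factorial : ℂ)⁻¹) • (C ^ k *ᵥ y) := by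
  letI : SeminormedRing (Matrix ι ι ℂ) := Matrix.linftyOpSemiNormedRing
  letI : NormedRing (Matrix ι ι ℂ) := Matrix.linftyOpNormedRing
  letI : NormedAlgebra ℂ (Matrix ι ι ℂ) := Matrix.linftyOpNormedAlgebra
  have hs : Summable (fun k : ℕ => ((k.factorial : ℂ)⁻¹) • C ^ k) := expSeries_summable' C
  have h := ((appVec y).toContinuousLinearMap).map_tsum hs
  simpa [exp_eq_tsum ℂ, appVec] using h

theorem exp_mulVec_eigen {A : Matrix ι ι ℂ} {v : ι → ℂ} {μ : ℂ} (h : A *ᵥ v = μ • v) :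
    exp A *ᵥ v = Complex.exp μ • v := by
  have hp : ∀ k : ℕ, A ^ k *ᵥ v = μ ^ k • v := by
    intro k
    induction k with
    | zero => simp [Matrix.one_mulVec]
    | succ k ih =>
      rw [pow_succ', ← Matrix.mulVec_mulVec, ih, Matrix.mulVec_smul, h, smul_smul, ← pow_succ]
  rw [exp_mulVec]
  simp_rw [hp, smul_smul]
  have hs : Summable (fun k : ℕ => ((k.factorial : ℂ)⁻¹) * μ ^ k) := by
    simpa [smul_eq_mul] using expSeries_summable' (𝕂 := ℂ) (𝔸 := ℂ) μ
  rw [Summable.tsum_smul_const]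
  · congr 1
    have : Complex.exp μ = exp μ := by rw [Complex.exp_eq_exp_ℂ]
    rw [this, exp_eq_tsum ℂ]
    simp [smul_eq_mul]
  · exact hs

theorem exp_mulVec_of_nilp {C : Matrix ι ι ℂ} {y : ι → ℂ} {d : ℕ}
    (h : ∀ j, d ≤ j → C ^ j *ᵥ y = 0) :
    exp C *ᵥ y = ∑ j ∈ Finset.range d, ((j.factorial : ℂ)⁻¹) • (C ^ j *ᵥ y) := by
  rw [exp_mulVec]
  exact tsum_eq_sum (fun j hj => by rw [h j (by simpa using hj), smul_zero])

theorem mem_spectrum_of_eigen {A : Matrix ι ι ℂ} {v : ι → ℂ} {μ : ℂ} (hv : v ≠ 0)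
    (h : A *ᵥ v = μ • v) : μ ∈ spectrum ℂ A := by
  rw [← AlgEquiv.spectrum_eq (Matrix.toLinAlgEquiv' : Matrix ι ι ℂ ≃ₐ[ℂ] _) A]
  rw [← Module.End.hasEigenvalue_iff_mem_spectrum]
  apply Module.End.hasEigenvalue_of_hasEigenvector (x := v)
  refine ⟨?_, hv⟩
  rw [Module.End.mem_eigenspace_iff]
  show Matrix.toLin' A v = μ • v
  rw [Matrix.toLin'_apply, h]

theorem strip_inj {μ ν : ℂ}
    (hμ : -Real.pi < μ.im ∧ μ.im < Real.pi) (hν : -Real.pi < ν.im ∧ ν.im < Real.pi)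
    (h : Complex.exp μ = Complex.exp ν) : μ = ν := by
  rw [Complex.exp_eq_exp_iff_exists_int] at h
  obtain ⟨m, hm⟩ := h
  have him : μ.im = ν.im + m * (2 * Real.pi) := by
    rw [hm]; simp [Complex.add_im, Complex.mul_im, Complex.mul_re]
  have hpi := Real.pi_pos
  have : (m : ℝ) = 0 := by
    rcases lt_trichotomy (m : ℝ) 0 with h1 | h1 | h1
    · have hz : m < 0 := by exact_mod_cast h1
      have hz2 : m + 1 ≤ 0 := Int.lt_iff_add_one_le.mp hz
      have : (m : ℝ) + 1 ≤ 0 := by exact_mod_cast hz2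
      nlinarith [hμ.1, hν.2, him]
    · exact h1
    · have hz : 0 < m := by exact_mod_cast h1
      have : (1 : ℝ) ≤ m := by exact_mod_cast Int.lt_iff_add_one_le.mp hz
      nlinarith [hμ.2, hν.1, him]
  have hm0 : m = 0 := by exact_mod_cast this
  rw [hm, hm0]; simp




theorem restrict_pow_coe (A : Matrix ι ι ℂ) {E : Submodule ℂ (ι → ℂ)}
    (hE : ∀ y ∈ E, Matrix.toLin' A y ∈ E) (μ₀ : ℂ) (j : ℕ) (y : ι → ℂ) (hy : y ∈ E) :
    ((A - μ₀ • 1) ^ j) *ᵥ y =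
      ((((Matrix.toLin' A).restrict hE - μ₀ • 1) ^ j) ⟨y, hy⟩ : ι → ℂ) := by
  induction j generalizing y hy with
  | zero => simp [Matrix.one_mulVec]
  | succ j ih =>
    have hmem : ∀ z : E, (((Matrix.toLin' A).restrict hE - μ₀ • 1) z : ι → ℂ) ∈ E := fun z => by
      exact Submodule.sub_mem _ (((Matrix.toLin' A).restrict hE) z).2
        (Submodule.smul_mem _ _ z.2)
    have step : ∀ (z : ι → ℂ) (hz : z ∈ E),
        (((((Matrix.toLin' A).restrict hE - μ₀ • 1)) ⟨z, hz⟩ : E) : ι → ℂ)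
          = (A - μ₀ • 1) *ᵥ z := by
      intro z hz
      have h1 : (((((Matrix.toLin' A).restrict hE - μ₀ • 1)) ⟨z, hz⟩ : E) : ι → ℂ)
          = A *ᵥ z - μ₀ • z := by
        simp [LinearMap.sub_apply, LinearMap.smul_apply, Module.End.one_apply,
          LinearMap.restrict_apply, Matrix.toLin'_apply]
      rw [h1, Matrix.sub_mulVec, Matrix.smul_mulVec, Matrix.one_mulVec]
    rw [pow_succ, ← Matrix.mulVec_mulVec, ← step y hy,
      ih _ (hmem ⟨y, hy⟩)]
    have h2 : (⟨(((((Matrix.toLin' A).restrict hE - μ₀ • 1)) ⟨y, hy⟩ : E) : ι → ℂ),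
        hmem ⟨y, hy⟩⟩ : E) = ((Matrix.toLin' A).restrict hE - μ₀ • 1) ⟨y, hy⟩ := Subtype.ext rfl
    rw [h2, ← Module.End.mul_apply, ← pow_succ]
end PLogAux

theorem PLogAux.exp_inj_of_strip {ι : Type*} [Fintype ι] [DecidableEq ι] (A B : Matrix ι ι ℂ)
    (hA : ∀ μ ∈ spectrum ℂ A, -Real.pi < μ.im ∧ μ.im < Real.pi)
    (hB : ∀ μ ∈ spectrum ℂ B, -Real.pi < μ.im ∧ μ.im < Real.pi)
    (hexp : NormedSpace.exp A = NormedSpace.exp B) : A = B := by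
  classical
  set H : Module.End ℂ (ι → ℂ) := Matrix.toLin' (NormedSpace.exp A) with hH
  have hcommA : Commute H (Matrix.toLin' A) := by
    have h0 : Commute (NormedSpace.exp A) A := ((Commute.refl A).exp_right).symm
    have := h0.map (Matrix.toLinAlgEquiv' : Matrix ι ι ℂ ≃ₐ[ℂ] _).toAlgHom
    exact this
  have hcommB : Commute H (Matrix.toLin' B) := by
    have h0 : Commute (NormedSpace.exp B) B := ((Commute.refl B).exp_right).symm
    have h1 := h0.map (Matrix.toLinAlgEquiv' : Matrix ι ι ℂ ≃ₐ[ℂ] _).toAlgHom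
    rw [hH, hexp]
    exact h1
  have hinvA : ∀ lam : ℂ, ∀ y ∈ H.maxGenEigenspace lam,
      Matrix.toLin' A y ∈ H.maxGenEigenspace lam := fun lam =>
    Module.End.mapsTo_maxGenEigenspace_of_comm hcommA lam
  have hinvB : ∀ lam : ℂ, ∀ y ∈ H.maxGenEigenspace lam,
      Matrix.toLin' B y ∈ H.maxGenEigenspace lam := fun lam =>
    Module.End.mapsTo_maxGenEigenspace_of_comm hcommB lam
  have key : ∀ (lam : ℂ) (x : ι → ℂ), x ∈ H.maxGenEigenspace lam → A *ᵥ x = B *ᵥ x := by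
    intro lam x hx
    by_cases hx0 : x = 0
    · simp [hx0, Matrix.mulVec_zero]
    set E := H.maxGenEigenspace lam with hE
    haveI : Nontrivial E :=
      ⟨⟨⟨x, hx⟩, 0, fun hc => hx0 (by simpa using congrArg Subtype.val hc)⟩⟩
    set FA := (Matrix.toLin' A).restrict (hinvA lam) with hFA
    set FB := (Matrix.toLin' B).restrict (hinvB lam) with hFB
    have eig : ∀ (C : Matrix ι ι ℂ)
        (hC : ∀ μ ∈ spectrum ℂ C, -Real.pi < μ.im ∧ μ.im < Real.pi)
        (hCexp : NormedSpace.exp C = NormedSpace.exp A)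
        (hinvC : ∀ y ∈ H.maxGenEigenspace lam,
          Matrix.toLin' C y ∈ H.maxGenEigenspace lam)
        (μ : ℂ), Module.End.HasEigenvalue ((Matrix.toLin' C).restrict hinvC) μ →
        (-Real.pi < μ.im ∧ μ.im < Real.pi) ∧ Complex.exp μ = lam := by
      intro C hC hCexp hinvC μ hμ
      obtain ⟨w, hw⟩ := hμ.exists_hasEigenvector
      have hv0 : (w : ι → ℂ) ≠ 0 := fun hc => hw.2 (Subtype.ext hc)
      have hAv : C *ᵥ (w : ι → ℂ) = μ • (w : ι → ℂ) := by
        have h2 := congrArg Subtype.val hw.apply_eq_smul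
        simpa [LinearMap.restrict_apply, Matrix.toLin'_apply] using h2
      refine ⟨hC μ (mem_spectrum_of_eigen hv0 hAv), ?_⟩
      have hEv : NormedSpace.exp C *ᵥ (w : ι → ℂ) = Complex.exp μ • (w : ι → ℂ) :=
        exp_mulVec_eigen hAv
      by_contra hne
      have hmem1 : (w : ι → ℂ) ∈ H.maxGenEigenspace (Complex.exp μ) := by
        rw [Module.End.mem_maxGenEigenspace]
        refine ⟨1, ?_⟩
        have hHw : H (w : ι → ℂ) = Complex.exp μ • (w : ι → ℂ) := by
          show Matrix.toLin' (NormedSpace.exp A) (w : ι → ℂ) = _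
          rw [← hCexp, Matrix.toLin'_apply]
          exact hEv
        simp [pow_one, LinearMap.sub_apply, hHw]
      have hdisj := H.disjoint_genEigenspace hne (⊤ : ℕ∞) (⊤ : ℕ∞)
      exact hv0 (Submodule.disjoint_def.mp hdisj _ hmem1 w.2)
    obtain ⟨μ₀, hμ₀⟩ := Module.End.exists_eigenvalue FA
    obtain ⟨hstrip₀, hlam₀⟩ := eig A hA rfl (hinvA lam) μ₀ hμ₀
    have hallA : ∀ μ, Module.End.HasEigenvalue FA μ → μ = μ₀ := fun μ hμ =>
      strip_inj (eig A hA rfl (hinvA lam) μ hμ).1 hstrip₀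
        (by rw [(eig A hA rfl (hinvA lam) μ hμ).2, hlam₀])
    have hallB : ∀ μ, Module.End.HasEigenvalue FB μ → μ = μ₀ := fun μ hμ =>
      strip_inj (eig B hB hexp.symm (hinvB lam) μ hμ).1 hstrip₀
        (by rw [(eig B hB hexp.symm (hinvB lam) μ hμ).2, hlam₀])
    obtain ⟨dA, hdA⟩ := sub_smul_one_pow_eq_zero FA μ₀ hallA
    obtain ⟨dB, hdB⟩ := sub_smul_one_pow_eq_zero FB μ₀ hallB
    set D := max dA dB + 2 with hD
    have hnilvec : ∀ (C : Matrix ι ι ℂ) (hinvC : ∀ y ∈ H.maxGenEigenspace lam,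
          Matrix.toLin' C y ∈ H.maxGenEigenspace lam) (d : ℕ),
        ((Matrix.toLin' C).restrict hinvC - μ₀ • 1) ^ d = 0 →
        ∀ j, d ≤ j → ((C - μ₀ • 1) ^ j) *ᵥ x = 0 := by
      intro C hinvC d hd j hj
      have h1 : ((C - μ₀ • 1) ^ d) *ᵥ x = 0 := by
        rw [restrict_pow_coe C hinvC μ₀ d x hx, hd]
        simp
      have hj' : j = (j - d) + d := by omega
      rw [hj', pow_add, ← Matrix.mulVec_mulVec, h1, Matrix.mulVec_zero]
    have hDA : ∀ j, D ≤ j → ((A - μ₀ • 1) ^ j) *ᵥ x = 0 :=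
      fun j hj => hnilvec A (hinvA lam) dA hdA j (by omega)
    have hDB : ∀ j, D ≤ j → ((B - μ₀ • 1) ^ j) *ᵥ x = 0 :=
      fun j hj => hnilvec B (hinvB lam) dB hdB j (by omega)
    have hsum : ∀ k : ℕ,
        ∑ j ∈ Finset.range D, (((j.factorial : ℂ))⁻¹ * (k:ℂ) ^ j) • ((A - μ₀ • 1) ^ j *ᵥ x)
          = ∑ j ∈ Finset.range D,
            (((j.factorial : ℂ))⁻¹ * (k:ℂ) ^ j) • ((B - μ₀ • 1) ^ j *ᵥ x) := by
      intro k
      have expand : ∀ (C : Matrix ι ι ℂ), (∀ j, D ≤ j → ((C - μ₀ • 1) ^ j) *ᵥ x = 0) →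
          NormedSpace.exp (k • C) *ᵥ x = Complex.exp ((k : ℂ) * μ₀) •
            ∑ j ∈ Finset.range D,
              (((j.factorial : ℂ))⁻¹ * (k:ℂ) ^ j) • ((C - μ₀ • 1) ^ j *ᵥ x) := by
        intro C hC
        letI : SeminormedRing (Matrix ι ι ℂ) := Matrix.linftyOpSemiNormedRing
        letI : NormedRing (Matrix ι ι ℂ) := Matrix.linftyOpNormedRing
        letI : NormedAlgebra ℂ (Matrix ι ι ℂ) := Matrix.linftyOpNormedAlgebra
        have hdecomp : (k • C : Matrix ι ι ℂ)
            = ((k : ℂ) * μ₀) • (1 : Matrix ι ι ℂ) + (k:ℂ) • (C - μ₀ • 1) := by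
          rw [← Nat.cast_smul_eq_nsmul ℂ]
          module
        have hcomm : Commute (((k : ℂ) * μ₀) • (1 : Matrix ι ι ℂ)) ((k:ℂ) • (C - μ₀ • 1)) :=
          ((Commute.one_left _).smul_left _).smul_right _
        rw [hdecomp, Matrix.exp_add_of_commute _ _ hcomm]
        have hsc : NormedSpace.exp (((k : ℂ) * μ₀) • (1 : Matrix ι ι ℂ))
            = Complex.exp ((k:ℂ) * μ₀) • (1 : Matrix ι ι ℂ) := by
          rw [← Algebra.algebraMap_eq_smul_one, ← Algebra.algebraMap_eq_smul_one, Complex.exp_eq_exp_ℂ]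
          exact (map_exp (algebraMap ℂ (Matrix ι ι ℂ)) (continuous_algebraMap ℂ _) _).symm
        rw [hsc, smul_mul_assoc, one_mul, Matrix.smul_mulVec]
        congr 1
        have hnil : ∀ j, D ≤ j → (((k:ℂ) • (C - μ₀ • 1)) ^ j) *ᵥ x = 0 := by
          intro j hj
          rw [_root_.smul_pow, Matrix.smul_mulVec, hC j hj, smul_zero]
        rw [exp_mulVec_of_nilp hnil]
        refine Finset.sum_congr rfl fun j _ => ?_
        rw [_root_.smul_pow, Matrix.smul_mulVec, smul_smul]
      have h3 : NormedSpace.exp (k • A) = NormedSpace.exp (k • B) := by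
        rw [Matrix.exp_nsmul, Matrix.exp_nsmul, hexp]
      have h4 := (expand A hDA).symm.trans
        ((congrArg (fun P => P *ᵥ x) h3).trans (expand B hDB))
      exact smul_right_injective (ι → ℂ) (Complex.exp_ne_zero _) h4
    have hNx : (A - μ₀ • 1) *ᵥ x = (B - μ₀ • 1) *ᵥ x := by
      funext i
      set cA : ℕ → ℂ := fun j => ((j.factorial : ℂ))⁻¹ * ((A - μ₀ • 1) ^ j *ᵥ x) i with hcA
      set cB : ℕ → ℂ := fun j => ((j.factorial : ℂ))⁻¹ * ((B - μ₀ • 1) ^ j *ᵥ x) i with hcB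
      set pA : Polynomial ℂ := ∑ j ∈ Finset.range D, Polynomial.C (cA j) * Polynomial.X ^ j
        with hpA
      set pB : Polynomial ℂ := ∑ j ∈ Finset.range D, Polynomial.C (cB j) * Polynomial.X ^ j
        with hpB
      have heval : ∀ k : ℕ, pA.eval (k : ℂ) = pB.eval (k : ℂ) := by
        intro k
        have h5 := congrFun (hsum k) i
        simp only [Finset.sum_apply, Pi.smul_apply, smul_eq_mul] at h5
        simp only [hpA, hpB, Polynomial.eval_finset_sum, Polynomial.eval_mul,
          Polynomial.eval_C, Polynomial.eval_pow, Polynomial.eval_X, hcA, hcB]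
        calc ∑ j ∈ Finset.range D, (j.factorial : ℂ)⁻¹ * ((A - μ₀ • 1) ^ j *ᵥ x) i * (k:ℂ) ^ j
            = ∑ j ∈ Finset.range D, (j.factorial : ℂ)⁻¹ * (k:ℂ) ^ j
              * ((A - μ₀ • 1) ^ j *ᵥ x) i := by
              exact Finset.sum_congr rfl fun j _ => by ring
          _ = ∑ j ∈ Finset.range D, (j.factorial : ℂ)⁻¹ * (k:ℂ) ^ j
              * ((B - μ₀ • 1) ^ j *ᵥ x) i := h5
          _ = ∑ j ∈ Finset.range D, (j.factorial : ℂ)⁻¹ * ((B - μ₀ • 1) ^ j *ᵥ x) i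
              * (k:ℂ) ^ j := Finset.sum_congr rfl fun j _ => by ring
      have hpq : pA = pB := by
        by_contra hne
        have hne0 : pA - pB ≠ 0 := sub_ne_zero.mpr hne
        have hfin : {z : ℂ | (pA - pB).IsRoot z}.Finite := Polynomial.finite_setOf_isRoot hne0
        have hsub : Set.range ((↑) : ℕ → ℂ) ⊆ {z : ℂ | (pA - pB).IsRoot z} := by
          rintro - ⟨k, rfl⟩
          simp [Polynomial.IsRoot, heval k]
        exact Set.infinite_range_of_injective Nat.cast_injective (hfin.subset hsub)
      have hco := congrArg (fun p => Polynomial.coeff p 1) hpq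
      have h1mem : (1 : ℕ) ∈ Finset.range D := by simp [hD]
      have hcoA : pA.coeff 1 = cA 1 := by
        rw [hpA, Polynomial.finset_sum_coeff]
        simp only [Polynomial.coeff_C_mul, Polynomial.coeff_X_pow]
        rw [Finset.sum_eq_single 1 (fun j _ hj => by simp [Ne.symm hj]) (fun h => absurd h1mem h)]
        simp
      have hcoB : pB.coeff 1 = cB 1 := by
        rw [hpB, Polynomial.finset_sum_coeff]
        simp only [Polynomial.coeff_C_mul, Polynomial.coeff_X_pow]
        rw [Finset.sum_eq_single 1 (fun j _ hj => by simp [Ne.symm hj]) (fun h => absurd h1mem h)]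
        simp
      have : cA 1 = cB 1 := by rw [← hcoA, ← hcoB]; exact hco
      simpa [hcA, hcB] using this
    have := congrArg (fun v => v + (μ₀ • (1 : Matrix ι ι ℂ)) *ᵥ x) hNx
    simpa [Matrix.sub_mulVec] using this
  have hall : ∀ x : ι → ℂ, A *ᵥ x = B *ᵥ x := by
    intro x
    have hx : x ∈ ⨆ lam : ℂ, H.maxGenEigenspace lam := by
      rw [Module.End.iSup_maxGenEigenspace_eq_top]; trivial
    refine Submodule.iSup_induction (motive := fun y => A *ᵥ y = B *ᵥ y) _ hx key ?_ ?_
    · simp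
    · intro y z hy hz
      rw [Matrix.mulVec_add, Matrix.mulVec_add, hy, hz]
  have : Matrix.toLin' A = Matrix.toLin' B := by
    apply LinearMap.ext
    intro v
    rw [Matrix.toLin'_apply, Matrix.toLin'_apply]
    exact hall v
  exact Matrix.toLin'.injective this


section FinalHelpers
variable {ι : Type*} [Fintype ι] [DecidableEq ι]

theorem PLogAux.spectrum_transpose (A : Matrix ι ι ℂ) : spectrum ℂ Aᵀ = spectrum ℂ A := by
  ext μ
  rw [spectrum.mem_iff, spectrum.mem_iff]
  have h1 : algebraMap ℂ (Matrix ι ι ℂ) μ - Aᵀ = (algebraMap ℂ (Matrix ι ι ℂ) μ - A)ᵀ := by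
    rw [Matrix.transpose_sub]
    congr 1
    rw [Matrix.algebraMap_eq_diagonal, Matrix.diagonal_transpose]
  rw [h1, Matrix.isUnit_iff_isUnit_det, Matrix.det_transpose, ← Matrix.isUnit_iff_isUnit_det]

end FinalHelpers

/-- Principal logarithm of a symplectic matrix is Hamiltonian: if `M` is symplectic with
no eigenvalue on the closed negative real axis, and `X` is a (real) logarithm of `M`
whose eigenvalues all lie in the strip `|Im z| < π` (i.e. `X` is the principal
logarithm of `M`), then `X` is Hamiltonian. -/
theorem principal_log_symplectic_is_hamiltonian (n : ℕ)
    (M X : Matrix (Fin n ⊕ Fin n) (Fin n ⊕ Fin n) ℝ)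
    (hM : Mᵀ * stdSymplJ n * M = stdSymplJ n)
    (hspec : ∀ μ ∈ spectrum ℂ (M.map (algebraMap ℝ ℂ)), ¬(μ.im = 0 ∧ μ.re ≤ 0))
    (hexp : NormedSpace.exp X = M)
    (hstrip : ∀ μ ∈ spectrum ℂ (X.map (algebraMap ℝ ℂ)),
      -Real.pi < μ.im ∧ μ.im < Real.pi) :
    Xᵀ * stdSymplJ n + stdSymplJ n * X = 0 := by
  classical
  set φ := (algebraMap ℝ ℂ).mapMatrix (m := Fin n ⊕ Fin n) with hφ
  set Jc : Matrix (Fin n ⊕ Fin n) (Fin n ⊕ Fin n) ℂ := φ (stdSymplJ n) with hJc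
  set Mc : Matrix (Fin n ⊕ Fin n) (Fin n ⊕ Fin n) ℂ := φ M with hMc
  set Xc : Matrix (Fin n ⊕ Fin n) (Fin n ⊕ Fin n) ℂ := φ X with hXc
  have hJJ : stdSymplJ n * stdSymplJ n = -1 := by
    rw [stdSymplJ, Matrix.fromBlocks_multiply]
    have h1 : (-1 : Matrix (Fin n ⊕ Fin n) (Fin n ⊕ Fin n) ℝ)
        = Matrix.fromBlocks (-1) (-0) (-0) (-1) := by
      rw [← Matrix.fromBlocks_neg, Matrix.fromBlocks_one]
    rw [h1]
    congr 1 <;> simp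
  have hJcJc : Jc * Jc = -1 := by
    rw [hJc, ← _root_.map_mul, hJJ, _root_.map_neg, _root_.map_one]
  -- the unit J
  set Ju : (Matrix (Fin n ⊕ Fin n) (Fin n ⊕ Fin n) ℂ)ˣ := ⟨Jc, -Jc, by rw [mul_neg, hJcJc, neg_neg],
    by rw [neg_mul, hJcJc, neg_neg]⟩ with hJu
  -- complexified exponential
  have hφcont : Continuous φ := by
    apply continuous_matrix
    intro i j
    exact Complex.continuous_ofReal.comp ((continuous_apply j).comp (continuous_apply i))
  have hexpC : NormedSpace.exp Xc = Mc := by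
    letI : SeminormedRing (Matrix (Fin n ⊕ Fin n) (Fin n ⊕ Fin n) ℝ) := Matrix.linftyOpSemiNormedRing
    letI : NormedRing (Matrix (Fin n ⊕ Fin n) (Fin n ⊕ Fin n) ℝ) := Matrix.linftyOpNormedRing
    letI : NormedAlgebra ℝ (Matrix (Fin n ⊕ Fin n) (Fin n ⊕ Fin n) ℝ) := Matrix.linftyOpNormedAlgebra
    letI : SeminormedRing (Matrix (Fin n ⊕ Fin n) (Fin n ⊕ Fin n) ℂ) := Matrix.linftyOpSemiNormedRing
    letI : NormedRing (Matrix (Fin n ⊕ Fin n) (Fin n ⊕ Fin n) ℂ) := Matrix.linftyOpNormedRing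
    letI : NormedAlgebra ℝ (Matrix (Fin n ⊕ Fin n) (Fin n ⊕ Fin n) ℂ) := Matrix.linftyOpNormedAlgebra
    letI : NormedAlgebra ℚ (Matrix (Fin n ⊕ Fin n) (Fin n ⊕ Fin n) ℝ) := Matrix.linftyOpNormedAlgebra
    have h1 : φ (NormedSpace.exp X) = NormedSpace.exp (φ X) :=
      map_exp φ hφcont X
    rw [hXc, ← h1, hMc, hexp]
  have hMcU : IsUnit Mc := by
    rw [← hexpC]
    exact Matrix.isUnit_exp Xc
  have hMJ : Mcᵀ * Jc * Mc = Jc := by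
    have := congrArg φ hM
    simpa [hφ, hMc, hJc, _root_.map_mul, Matrix.transpose_map] using this
  have hJ1 : (-Jc) * Jc = 1 := by rw [neg_mul, hJcJc, neg_neg]
  have hJ2 : Jc * (-Jc) = 1 := by rw [mul_neg, hJcJc, neg_neg]
  -- Y := J⁻¹ Xᵀ J
  have hexpY : NormedSpace.exp ((-Jc) * Xcᵀ * Jc) = (-Jc) * Mcᵀ * Jc := by
    have h := Matrix.exp_units_conj' Ju Xcᵀ
    rw [Matrix.exp_transpose, hexpC] at h
    exact h
  have hinv1 : ((-Jc) * Mcᵀ * Jc) * Mc = 1 := by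
    calc ((-Jc) * Mcᵀ * Jc) * Mc = (-Jc) * (Mcᵀ * Jc * Mc) := by simp only [mul_assoc]
      _ = (-Jc) * Jc := by rw [hMJ]
      _ = 1 := hJ1
  have hinv2 : NormedSpace.exp (-Xc) * Mc = 1 := by
    rw [← hexpC, ← Matrix.exp_add_of_commute _ _ ((Commute.refl Xc).neg_left),
      neg_add_cancel, NormedSpace.exp_zero]
  have hYX : NormedSpace.exp ((-Jc) * Xcᵀ * Jc) = NormedSpace.exp (-Xc) := by
    have e1 : Mc⁻¹ = NormedSpace.exp ((-Jc) * Xcᵀ * Jc) :=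
      Matrix.inv_eq_left_inv (by rw [hexpY]; exact hinv1)
    have e2 : Mc⁻¹ = NormedSpace.exp (-Xc) := Matrix.inv_eq_left_inv hinv2
    rw [← e1, e2]
  -- spectra
  have hsY : ∀ μ ∈ spectrum ℂ ((-Jc) * Xcᵀ * Jc), -Real.pi < μ.im ∧ μ.im < Real.pi := by
    intro μ hμ
    have hconj : spectrum ℂ ((-Jc) * Xcᵀ * Jc) = spectrum ℂ Xcᵀ :=
      spectrum.units_conjugate' (u := Ju) (a := Xcᵀ)
    rw [hconj, PLogAux.spectrum_transpose] at hμ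
    exact hstrip μ hμ
  have hsX : ∀ μ ∈ spectrum ℂ (-Xc), -Real.pi < μ.im ∧ μ.im < Real.pi := by
    intro μ hμ
    rw [← spectrum.neg_eq, Set.mem_neg] at hμ
    have h := hstrip (-μ) hμ
    constructor
    · have h2 := h.2; simp only [Complex.neg_im] at h2; linarith
    · have h2 := h.1; simp only [Complex.neg_im] at h2; linarith
  have hfinal : (-Jc) * Xcᵀ * Jc = -Xc :=
    PLogAux.exp_inj_of_strip _ _ hsY hsX hYX
  -- unwind
  have hXJ : Xcᵀ * Jc + Jc * Xc = 0 := by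
    have h7 : Jc * ((-Jc) * Xcᵀ * Jc) = Jc * (-Xc) := by rw [hfinal]
    have h9 : Xcᵀ * Jc = -(Jc * Xc) := by
      calc Xcᵀ * Jc = (Jc * (-Jc)) * (Xcᵀ * Jc) := by rw [hJ2, one_mul]
        _ = Jc * ((-Jc) * Xcᵀ * Jc) := by simp only [mul_assoc]
        _ = Jc * (-Xc) := h7
        _ = -(Jc * Xc) := by rw [mul_neg]
    rw [h9, neg_add_cancel]
  -- descend to ℝ
  have hφ0 : φ (Xᵀ * stdSymplJ n + stdSymplJ n * X) = 0 := by
    rw [map_add, _root_.map_mul, _root_.map_mul]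
    have ht : φ Xᵀ = Xcᵀ := by
      rw [hXc, hφ, RingHom.mapMatrix_apply, RingHom.mapMatrix_apply, Matrix.transpose_map]
    rw [ht]
    exact hXJ
  have hinj : Function.Injective φ := by
    intro P Q h
    ext i j
    have h1 : (φ P) i j = (φ Q) i j := by rw [h]
    have h2 : algebraMap ℝ ℂ (P i j) = algebraMap ℝ ℂ (Q i j) := by
      simpa [hφ, RingHom.mapMatrix_apply, Matrix.map_apply] using h1
    exact (algebraMap ℝ ℂ).injective h2
  exact hinj (by rw [hφ0, map_zero])
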